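/- arXiv:1308.1470 — 3 statements merged into one kernel-verified Lean document; each statement's English description precedes it below -/
import Mathlib

section
/- Let α, β, γ, δ be nonzero complex numbers such that the multiset {α⁻¹, β⁻¹, γ⁻¹, δ⁻¹} equals the multiset of complex conjugates {conj α, conj β, conj γ, conj δ}. If |α| > 1, then either (a) there exist a unitary u (|u|=1), a real t > 0, and elements of the multiset equal to u·q^t and u·q^(-t) (for q = |α|^{1/t}, i.e., two of the four numbers are u·x and u·x⁻¹ with x = |α| > 1) while the remaining two have absolute value 1, or (b) the multiset can be written as {u·x, u·x⁻¹, v·y, v·y⁻¹} with |u| = |v| = 1 and x, y > 1. -/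
open Complex

lemma sig_sig (z : ℂ) : ((starRingEnd ℂ) (((starRingEnd ℂ) z)⁻¹))⁻¹ = z := by
  rw [map_inv₀, inv_inv, Complex.conj_conj]

lemma sig_eq (z : ℂ) :
    ((starRingEnd ℂ) z)⁻¹ = (z / ‖z‖) * (‖z‖ : ℂ)⁻¹ := by
  rw [Complex.inv_def, Complex.conj_conj, Complex.normSq_conj, Complex.normSq_eq_norm_sq, sq]
  push_cast
  rw [mul_inv, div_eq_mul_inv, mul_assoc]

lemma fix_iff (z : ℂ) (hz : z ≠ 0) : ((starRingEnd ℂ) z)⁻¹ = z ↔ ‖z‖ = 1 := by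
  constructor
  · intro h
    have h1 : (starRingEnd ℂ) z = z⁻¹ := inv_eq_iff_eq_inv.mp h
    have h2 : z * (starRingEnd ℂ) z = 1 := by rw [h1, mul_inv_cancel₀ hz]
    rw [Complex.mul_conj] at h2
    have h3 : Complex.normSq z = 1 := by exact_mod_cast h2
    have h4 := Complex.sq_norm z
    nlinarith [norm_nonneg z]
  · intro h
    have h3 : Complex.normSq z = 1 := by rw [← Complex.sq_norm, h]; norm_num
    have h2 : z * (starRingEnd ℂ) z = 1 := by rw [Complex.mul_conj, h3]; norm_num
    have h1 : (starRingEnd ℂ) z = z⁻¹ := eq_inv_of_mul_eq_one_right h2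
    rw [h1, inv_inv]

lemma abs_sig (z : ℂ) : ‖((starRingEnd ℂ) z)⁻¹‖ = (‖z‖)⁻¹ := by
  rw [norm_inv, Complex.norm_conj]

lemma unit_part (z : ℂ) (hz : 0 < ‖z‖) :
    ‖z / (‖z‖ : ℂ)‖ = 1 := by
  rw [norm_div, Complex.norm_real, norm_norm, div_self (ne_of_gt hz)]

lemma swap34 (a b c d : ℂ) : ({a, b, c, d} : Multiset ℂ) = {a, b, d, c} := by
  simp only [Multiset.insert_eq_cons, ← Multiset.cons_zero]
  rw [Multiset.cons_swap c d]

lemma key2 (α γ δ : ℂ) (hα : α ≠ 0) (hγ : γ ≠ 0) (hδ : δ ≠ 0)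
    (habs : 1 < ‖α‖)
    (hpair : ({((starRingEnd ℂ) γ)⁻¹, ((starRingEnd ℂ) δ)⁻¹} : Multiset ℂ) = {γ, δ}) :
    (∃ u c d : ℂ, ‖u‖ = 1 ∧ ‖c‖ = 1 ∧ ‖d‖ = 1 ∧
      ({α, ((starRingEnd ℂ) α)⁻¹, γ, δ} : Multiset ℂ) =
        {u * (‖α‖ : ℂ), u * (‖α‖ : ℂ)⁻¹, c, d}) ∨
    (∃ (u v : ℂ) (x y : ℝ), ‖u‖ = 1 ∧ ‖v‖ = 1 ∧ 1 < x ∧ 1 < y ∧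
      ({α, ((starRingEnd ℂ) α)⁻¹, γ, δ} : Multiset ℂ) =
        {u * (x : ℂ), u * (x : ℂ)⁻¹, v * (y : ℂ), v * (y : ℂ)⁻¹}) := by
  have hpos : 0 < ‖α‖ := lt_trans one_pos habs
  have hxne : (‖α‖ : ℂ) ≠ 0 := by
    exact_mod_cast ne_of_gt hpos
  set u := α / (‖α‖ : ℂ) with hu_def
  have hu : ‖u‖ = 1 := unit_part α hpos
  have hax : u * (‖α‖ : ℂ) = α := div_mul_cancel₀ α hxne
  have haσ : u * (‖α‖ : ℂ)⁻¹ = ((starRingEnd ℂ) α)⁻¹ := (sig_eq α).symm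
  have hm : ((starRingEnd ℂ) γ)⁻¹ ∈ ({γ, δ} : Multiset ℂ) := by
    rw [← hpair]; exact Multiset.mem_cons_self _ _
  simp only [Multiset.insert_eq_cons, Multiset.mem_cons, Multiset.mem_singleton] at hm
  rcases hm with h1 | h1
  · have h2 : ((starRingEnd ℂ) δ)⁻¹ = δ := by
      rw [h1] at hpair
      simpa using hpair
    refine Or.inl ⟨u, γ, δ, hu, (fix_iff γ hγ).mp h1, (fix_iff δ hδ).mp h2, ?_⟩
    rw [hax, haσ]
  · rcases lt_trichotomy (‖γ‖) 1 with hlt | heq | hgt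
    · have hδa : ‖δ‖ = (‖γ‖)⁻¹ := by rw [← h1, abs_sig]
      have hγpos : 0 < ‖γ‖ := norm_pos_iff.mpr hγ
      have hy : 1 < ‖δ‖ := by
        rw [hδa]; exact one_lt_inv₀ hγpos |>.mpr hlt
      have hδpos : 0 < ‖δ‖ := lt_trans one_pos hy
      have hyne : (‖δ‖ : ℂ) ≠ 0 := by exact_mod_cast ne_of_gt hδpos
      set v := δ / (‖δ‖ : ℂ) with hv_def
      have hv : ‖v‖ = 1 := unit_part δ hδpos
      have hδeq : v * (‖δ‖ : ℂ) = δ := div_mul_cancel₀ δ hyne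
      have hγeq : v * (‖δ‖ : ℂ)⁻¹ = γ := by
        rw [← sig_eq δ, ← h1, sig_sig]
      refine Or.inr ⟨u, v, ‖α‖, ‖δ‖, hu, hv, habs, hy, ?_⟩
      rw [hax, haσ, hδeq, hγeq]
      exact swap34 α _ γ δ
    · have h2 : ((starRingEnd ℂ) γ)⁻¹ = γ := (fix_iff γ hγ).mpr heq
      have hδγ : δ = γ := by rw [← h1, h2]
      refine Or.inl ⟨u, γ, δ, hu, heq, by rw [hδγ]; exact heq, ?_⟩
      rw [hax, haσ]
    · have hγpos : 0 < ‖γ‖ := norm_pos_iff.mpr hγ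
      have hyne : (‖γ‖ : ℂ) ≠ 0 := by exact_mod_cast ne_of_gt hγpos
      set v := γ / (‖γ‖ : ℂ) with hv_def
      have hv : ‖v‖ = 1 := unit_part γ hγpos
      have hγeq : v * (‖γ‖ : ℂ) = γ := div_mul_cancel₀ γ hyne
      have hδeq : v * (‖γ‖ : ℂ)⁻¹ = δ := (sig_eq γ).symm.trans h1
      refine Or.inr ⟨u, v, ‖α‖, ‖γ‖, hu, hv, habs, hgt, ?_⟩
      rw [hax, haσ, hγeq, hδeq]

lemma cancel_ba (a b p q c d : ℂ) (h : ({b, a, p, q} : Multiset ℂ) = {a, b, c, d}) :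
    ({p, q} : Multiset ℂ) = {c, d} := by
  simp only [Multiset.insert_eq_cons, ← Multiset.cons_zero] at h ⊢
  rw [Multiset.cons_swap b a] at h
  exact (Multiset.cons_inj_right _).mp ((Multiset.cons_inj_right _).mp h)

lemma cancel_c (a c p q b d : ℂ) (h : ({c, p, a, q} : Multiset ℂ) = {a, b, c, d}) :
    ({p, q} : Multiset ℂ) = {b, d} := by
  simp only [Multiset.insert_eq_cons, ← Multiset.cons_zero] at h ⊢
  rw [Multiset.cons_swap p a, Multiset.cons_swap c a, Multiset.cons_swap b c] at h
  exact (Multiset.cons_inj_right _).mp ((Multiset.cons_inj_right _).mp h)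

lemma cancel_d (a d p q b c : ℂ) (h : ({d, p, q, a} : Multiset ℂ) = {a, b, c, d}) :
    ({p, q} : Multiset ℂ) = {b, c} := by
  simp only [Multiset.insert_eq_cons, ← Multiset.cons_zero] at h ⊢
  rw [Multiset.cons_swap q a, Multiset.cons_swap p a, Multiset.cons_swap d a,
    Multiset.cons_swap c d, Multiset.cons_swap b d] at h
  exact (Multiset.cons_inj_right _).mp ((Multiset.cons_inj_right _).mp h)

lemma perm_bc (a b c d : ℂ) : ({a, b, c, d} : Multiset ℂ) = {a, c, b, d} := by
  simp only [Multiset.insert_eq_cons, ← Multiset.cons_zero]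
  rw [Multiset.cons_swap b c]

lemma perm_rot (a b c d : ℂ) : ({a, b, c, d} : Multiset ℂ) = {a, d, b, c} := by
  simp only [Multiset.insert_eq_cons, ← Multiset.cons_zero]
  rw [Multiset.cons_swap c d, Multiset.cons_swap b d]

theorem satake_gl4_structure
    (α β γ δ : ℂ) (hα : α ≠ 0) (hβ : β ≠ 0) (hγ : γ ≠ 0) (hδ : δ ≠ 0)
    (hmult : ({α⁻¹, β⁻¹, γ⁻¹, δ⁻¹} : Multiset ℂ) =
      {(starRingEnd ℂ) α, (starRingEnd ℂ) β, (starRingEnd ℂ) γ, (starRingEnd ℂ) δ})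
    (habs : 1 < ‖α‖) :
    (∃ u c d : ℂ, ‖u‖ = 1 ∧ ‖c‖ = 1 ∧ ‖d‖ = 1 ∧
      ({α, β, γ, δ} : Multiset ℂ) =
        {u * (‖α‖ : ℂ), u * (‖α‖ : ℂ)⁻¹, c, d}) ∨
    (∃ (u v : ℂ) (x y : ℝ), ‖u‖ = 1 ∧ ‖v‖ = 1 ∧ 1 < x ∧ 1 < y ∧
      ({α, β, γ, δ} : Multiset ℂ) =
        {u * (x : ℂ), u * (x : ℂ)⁻¹, v * (y : ℂ), v * (y : ℂ)⁻¹}) := by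
  have hσ : ({((starRingEnd ℂ) α)⁻¹, ((starRingEnd ℂ) β)⁻¹, ((starRingEnd ℂ) γ)⁻¹,
      ((starRingEnd ℂ) δ)⁻¹} : Multiset ℂ) = {α, β, γ, δ} := by
    have h := congrArg (Multiset.map (starRingEnd ℂ)) hmult
    simpa [Multiset.insert_eq_cons, map_inv₀, Complex.conj_conj] using h
  have hmem : ((starRingEnd ℂ) α)⁻¹ ∈ ({α, β, γ, δ} : Multiset ℂ) := by
    rw [← hσ]
    simp only [Multiset.insert_eq_cons]
    exact Multiset.mem_cons_self _ _
  simp only [Multiset.insert_eq_cons, Multiset.mem_cons, Multiset.mem_singleton] at hmem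
  have hne : ((starRingEnd ℂ) α)⁻¹ ≠ α := by
    intro h
    have h1 := (fix_iff α hα).mp h
    rw [h1] at habs
    exact lt_irrefl 1 habs
  rcases hmem with h | h | h | h
  · exact absurd h hne
  · -- σα = β
    have hσβ : ((starRingEnd ℂ) β)⁻¹ = α := by rw [← h, sig_sig]
    rw [h, hσβ] at hσ
    have hpair := cancel_ba α β _ _ γ δ hσ
    have hres := key2 α γ δ hα hγ hδ habs hpair
    rw [h] at hres
    exact hres
  · -- σα = γ
    have hσγ : ((starRingEnd ℂ) γ)⁻¹ = α := by rw [← h, sig_sig]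
    rw [h, hσγ] at hσ
    have hpair := cancel_c α γ _ _ β δ hσ
    have hres := key2 α β δ hα hβ hδ habs hpair
    rw [h] at hres
    rw [perm_bc α β γ δ]
    exact hres
  · -- σα = δ
    have hσδ : ((starRingEnd ℂ) δ)⁻¹ = α := by rw [← h, sig_sig]
    rw [h, hσδ] at hσ
    have hpair := cancel_d α δ _ _ β γ hσ
    have hres := key2 α β γ hα hβ hγ habs hpair
    rw [h] at hres
    rw [perm_rot α β γ δ]
    exact hres
end

section
/- Let α, β, γ be nonzero complex numbers with {α⁻¹, β⁻¹, γ⁻¹} = {conj α, conj β, conj γ} as multisets. If not all of |α|, |β|, |γ| equal 1, then exactly one of them has absolute value 1 and the other two can be written as u·x and u·x⁻¹ where |u| = 1 and x > 1 is real. -/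
open Complex

private lemma ms_swap12 (a b c : ℂ) : ({a,b,c} : Multiset ℂ) = {b,a,c} := by
  simp only [Multiset.insert_eq_cons]; exact Multiset.cons_swap a b _

private lemma ms_swap23 (a b c : ℂ) : ({a,b,c} : Multiset ℂ) = {a,c,b} := by
  simp only [Multiset.insert_eq_cons]; exact congrArg (a ::ₘ ·) (Multiset.cons_swap b c _)

private lemma ms_rot (a b c : ℂ) : ({a,b,c} : Multiset ℂ) = {b,c,a} := by
  rw [ms_swap12, ms_swap23]

private lemma pair_cases {b c e f : ℂ} (h : ({b,c} : Multiset ℂ) = {e,f}) :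
    (b = e ∧ c = f) ∨ (b = f ∧ c = e) := by
  have hb : b ∈ ({e,f} : Multiset ℂ) := h ▸ by simp
  simp only [Multiset.insert_eq_cons, Multiset.mem_cons, Multiset.mem_singleton] at hb
  simp only [Multiset.insert_eq_cons] at h
  rcases hb with hb | hb
  · subst hb
    left
    refine ⟨rfl, ?_⟩
    have := (Multiset.cons_inj_right b).mp h
    simpa using this
  · subst hb
    right
    refine ⟨rfl, ?_⟩
    have h' : b ::ₘ ({c} : Multiset ℂ) = b ::ₘ ({e} : Multiset ℂ) := by
      rw [h]; exact Multiset.cons_swap e b _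
    have := (Multiset.cons_inj_right b).mp h'
    simpa using this

private lemma triple_cases {a b c d e f : ℂ} (h : ({a,b,c} : Multiset ℂ) = {d,e,f}) :
    (a = d ∧ b = e ∧ c = f) ∨ (a = d ∧ b = f ∧ c = e) ∨
    (a = e ∧ b = d ∧ c = f) ∨ (a = e ∧ b = f ∧ c = d) ∨
    (a = f ∧ b = d ∧ c = e) ∨ (a = f ∧ b = e ∧ c = d) := by
  have hamem : a ∈ ({d,e,f} : Multiset ℂ) := h ▸ by simp
  simp only [Multiset.insert_eq_cons, Multiset.mem_cons, Multiset.mem_singleton] at hamem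
  rcases hamem with ha | ha | ha
  · subst ha
    have h' : ({b,c} : Multiset ℂ) = {e,f} := by
      simp only [Multiset.insert_eq_cons] at h
      exact (Multiset.cons_inj_right a).mp h
    rcases pair_cases h' with ⟨h1,h2⟩ | ⟨h1,h2⟩
    · exact Or.inl ⟨rfl, h1, h2⟩
    · exact Or.inr (Or.inl ⟨rfl, h1, h2⟩)
  · subst ha
    have h2 : ({a,b,c} : Multiset ℂ) = {a,d,f} := by rw [h, ms_swap12]
    have h' : ({b,c} : Multiset ℂ) = {d,f} := by
      simp only [Multiset.insert_eq_cons] at h2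
      exact (Multiset.cons_inj_right a).mp h2
    rcases pair_cases h' with ⟨h1,h2⟩ | ⟨h1,h2⟩
    · exact Or.inr (Or.inr (Or.inl ⟨rfl, h1, h2⟩))
    · exact Or.inr (Or.inr (Or.inr (Or.inl ⟨rfl, h1, h2⟩)))
  · subst ha
    have h2 : ({a,b,c} : Multiset ℂ) = {a,d,e} := by rw [h, ms_swap23, ms_swap12]
    have h' : ({b,c} : Multiset ℂ) = {d,e} := by
      simp only [Multiset.insert_eq_cons] at h2
      exact (Multiset.cons_inj_right a).mp h2
    rcases pair_cases h' with ⟨h1,h2⟩ | ⟨h1,h2⟩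
    · exact Or.inr (Or.inr (Or.inr (Or.inr (Or.inl ⟨rfl, h1, h2⟩))))
    · exact Or.inr (Or.inr (Or.inr (Or.inr (Or.inr ⟨rfl, h1, h2⟩))))

private lemma abs_rel {a b : ℂ} (h : a⁻¹ = (starRingEnd ℂ) b) :
    ‖a‖⁻¹ = ‖b‖ := by
  have := congrArg (‖·‖) h
  simpa [map_inv₀] using this

private lemma abs_one_of_self {a : ℂ} (ha : a ≠ 0) (h : a⁻¹ = (starRingEnd ℂ) a) :
    ‖a‖ = 1 := by
  have h1 := abs_rel h
  have h2 : 0 < ‖a‖ := norm_pos_iff.mpr ha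
  have h3 : ‖a‖ * ‖a‖ = 1 := by
    field_simp at h1
    nlinarith
  nlinarith

private lemma pair_struct {a b : ℂ} (ha : a ≠ 0) (h : a⁻¹ = (starRingEnd ℂ) b)
    (hne : ‖a‖ ≠ 1) :
    ∃ (u : ℂ) (x : ℝ), ‖u‖ = 1 ∧ 1 < x ∧
      ((a = u * (x:ℂ) ∧ b = u * (x:ℂ)⁻¹) ∨ (a = u * (x:ℂ)⁻¹ ∧ b = u * (x:ℂ))) := by
  set r : ℝ := ‖a‖ with hr
  have hr0 : 0 < r := norm_pos_iff.mpr ha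
  have hbeq : b = ((starRingEnd ℂ) a)⁻¹ := by
    have := congrArg (starRingEnd ℂ) h
    simp only [map_inv₀, Complex.conj_conj] at this
    rw [← this]
  set u : ℂ := a / (r : ℂ) with hu
  have hrC : (r : ℂ) ≠ 0 := by exact_mod_cast hr0.ne'
  have huabs : ‖u‖ = 1 := by
    rw [hu, norm_div]
    rw [Complex.norm_real, Real.norm_eq_abs, abs_of_pos hr0, ← hr]
    field_simp
  have hau : a = u * (r : ℂ) := by
    rw [hu, div_mul_cancel₀ a hrC]
  have hcu : (starRingEnd ℂ) u = u⁻¹ := (Complex.inv_eq_conj huabs).symm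
  have hbu : b = u * ((r : ℂ))⁻¹ := by
    rw [hbeq, hau, map_mul, hcu, Complex.conj_ofReal, mul_inv, inv_inv]
  rcases lt_or_gt_of_ne hne with hlt | hgt
  · refine ⟨u, r⁻¹, huabs, ?_, Or.inr ⟨?_, ?_⟩⟩
    · rw [lt_inv_comm₀ one_pos hr0]; simpa using hlt
    · rw [hau]; push_cast; rw [inv_inv]
    · rw [hbu]; push_cast; ring
  · exact ⟨u, r, huabs, hgt, Or.inl ⟨hau, hbu⟩⟩

theorem satake_gl3_structure
    (α β γ : ℂ) (hα : α ≠ 0) (hβ : β ≠ 0) (hγ : γ ≠ 0)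
    (hmult : ({α⁻¹, β⁻¹, γ⁻¹} : Multiset ℂ) =
      {(starRingEnd ℂ) α, (starRingEnd ℂ) β, (starRingEnd ℂ) γ})
    (hnotall : ¬ (‖α‖ = 1 ∧ ‖β‖ = 1 ∧ ‖γ‖ = 1)) :
    ∃ (u c : ℂ) (x : ℝ), ‖u‖ = 1 ∧ ‖c‖ = 1 ∧ 1 < x ∧
      ({α, β, γ} : Multiset ℂ) = {u * (x : ℂ), u * (x : ℂ)⁻¹, c} := by
  have haP : 0 < ‖α‖ := norm_pos_iff.mpr hα
  have hbP : 0 < ‖β‖ := norm_pos_iff.mpr hβ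
  have hcP : 0 < ‖γ‖ := norm_pos_iff.mpr hγ
  rcases triple_cases hmult with ⟨h1,h2,h3⟩ | ⟨h1,h2,h3⟩ | ⟨h1,h2,h3⟩ |
      ⟨h1,h2,h3⟩ | ⟨h1,h2,h3⟩ | ⟨h1,h2,h3⟩
  · exact absurd ⟨abs_one_of_self hα h1, abs_one_of_self hβ h2, abs_one_of_self hγ h3⟩ hnotall
  · -- α fixed, β ↔ γ swapped
    have hA := abs_one_of_self hα h1
    have hBC := abs_rel h2
    have hBne : ‖β‖ ≠ 1 := by
      intro hB
      have hC : ‖γ‖ = 1 := by rw [← hBC, hB]; norm_num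
      exact hnotall ⟨hA, hB, hC⟩
    obtain ⟨u, x, hu, hx, hcase⟩ := pair_struct hβ h2 hBne
    refine ⟨u, α, x, hu, hA, hx, ?_⟩
    rcases hcase with ⟨e1, e2⟩ | ⟨e1, e2⟩
    · rw [e1, e2, ms_rot]
    · rw [e1, e2, ms_rot, ms_swap12]
  · -- α ↔ β swapped, γ fixed
    have hC := abs_one_of_self hγ h3
    have hAB := abs_rel h1
    have hAne : ‖α‖ ≠ 1 := by
      intro hA
      have hB : ‖β‖ = 1 := by rw [← hAB, hA]; norm_num
      exact hnotall ⟨hA, hB, hC⟩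
    obtain ⟨u, x, hu, hx, hcase⟩ := pair_struct hα h1 hAne
    refine ⟨u, γ, x, hu, hC, hx, ?_⟩
    rcases hcase with ⟨e1, e2⟩ | ⟨e1, e2⟩
    · rw [e1, e2]
    · rw [e1, e2, ms_swap12]
  · -- 3-cycle
    have hAB := abs_rel h1
    have hBC := abs_rel h2
    have hCA := abs_rel h3
    exfalso
    apply hnotall
    field_simp at hAB hBC hCA
    have hA : ‖α‖ = 1 := by nlinarith
    refine ⟨hA, ?_, ?_⟩ <;> nlinarith
  · -- 3-cycle
    have hAC := abs_rel h1
    have hBA := abs_rel h2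
    have hCB := abs_rel h3
    exfalso
    apply hnotall
    field_simp at hAC hBA hCB
    have hA : ‖α‖ = 1 := by nlinarith
    refine ⟨hA, ?_, ?_⟩ <;> nlinarith
  · -- α ↔ γ swapped, β fixed
    have hB := abs_one_of_self hβ h2
    have hAC := abs_rel h1
    have hAne : ‖α‖ ≠ 1 := by
      intro hA
      have hC : ‖γ‖ = 1 := by rw [← hAC, hA]; norm_num
      exact hnotall ⟨hA, hB, hC⟩
    obtain ⟨u, x, hu, hx, hcase⟩ := pair_struct hα h1 hAne
    refine ⟨u, β, x, hu, hB, hx, ?_⟩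
    rcases hcase with ⟨e1, e2⟩ | ⟨e1, e2⟩
    · rw [e1, e2, ms_swap23]
    · rw [e1, e2, ms_swap23, ms_swap12]
end

section
/- Let α, β, γ, δ be nonzero complex numbers with αβγδ = -1, with {α⁻¹, β⁻¹, γ⁻¹, δ⁻¹} = {α, β, γ, δ} = {conj α, conj β, conj γ, conj δ} as multisets. If some |α_i| > 1, then the multiset equals {u q^t, u q^(-t), 1, -1} for some u ∈ {1, -1}, q^t > 1. -/
open Complex

theorem self_dual_w_neg_one_structure
    (α β γ δ : ℂ) (hα : α ≠ 0) (hβ : β ≠ 0) (hγ : γ ≠ 0) (hδ : δ ≠ 0)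
    (hdet : α * β * γ * δ = -1)
    (hinv : ({α⁻¹, β⁻¹, γ⁻¹, δ⁻¹} : Multiset ℂ) = {α, β, γ, δ})
    (hconj : ({α, β, γ, δ} : Multiset ℂ) =
      {(starRingEnd ℂ) α, (starRingEnd ℂ) β, (starRingEnd ℂ) γ, (starRingEnd ℂ) δ})
    (hbig : 1 < ‖α‖ ∨ 1 < ‖β‖ ∨ 1 < ‖γ‖ ∨ 1 < ‖δ‖) :
    ∃ (u x : ℝ), (u = 1 ∨ u = -1) ∧ 1 < x ∧
      ({α, β, γ, δ} : Multiset ℂ) = {(u : ℂ) * (x : ℂ), (u : ℂ) * (x : ℂ)⁻¹, 1, -1} := by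
  set S : Multiset ℂ := {α, β, γ, δ} with hS
  have hSinv : S.map (·⁻¹) = S := by
    rw [hS]; simpa [hS] using hinv
  have hSconj : S.map (starRingEnd ℂ) = S := by
    rw [hS]; simpa [hS] using hconj.symm
  have hprod : S.prod = -1 := by
    simp only [hS, Multiset.insert_eq_cons, Multiset.prod_cons, Multiset.prod_singleton]
    linear_combination hdet
  have hcard : Multiset.card S = 4 := by simp [hS]
  obtain ⟨z, hzS, hz⟩ : ∃ z ∈ S, 1 < ‖z‖ := by
    rcases hbig with h | h | h | h
    exacts [⟨α, by simp [hS], h⟩, ⟨β, by simp [hS], h⟩, ⟨γ, by simp [hS], h⟩,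
      ⟨δ, by simp [hS], h⟩]
  have hz0 : z ≠ 0 := by
    intro h; rw [h, norm_zero] at hz; linarith
  have hmem_inv : ∀ w ∈ S, w⁻¹ ∈ S := fun w hw => by
    rw [← hSinv]; exact Multiset.mem_map_of_mem _ hw
  have hmem_conj : ∀ w ∈ S, (starRingEnd ℂ) w ∈ S := fun w hw => by
    rw [← hSconj]; exact Multiset.mem_map_of_mem _ hw
  have habs_inv : ‖z⁻¹‖ < 1 := by
    rw [norm_inv]
    exact inv_lt_one_of_one_lt₀ hz
  have hzne : z⁻¹ ≠ z := fun h => by rw [h] at habs_inv; linarith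
  by_cases him : z.im = 0
  · -- z is real
    have e1 : S = z ::ₘ S.erase z := (Multiset.cons_erase hzS).symm
    have m2 : z⁻¹ ∈ S.erase z := (Multiset.mem_erase_of_ne hzne).mpr (hmem_inv z hzS)
    have e2 : S.erase z = z⁻¹ ::ₘ (S.erase z).erase z⁻¹ := (Multiset.cons_erase m2).symm
    set T : Multiset ℂ := (S.erase z).erase z⁻¹ with hT
    have hST : S = z ::ₘ z⁻¹ ::ₘ T := by rw [e1, e2]
    have hTcard : Multiset.card T = 2 := by
      have h4 := hcard
      rw [hST] at h4
      simpa using h4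
    obtain ⟨c, d, hcd⟩ := Multiset.card_eq_two.mp hTcard
    have hcdprod : c * d = -1 := by
      have h := hprod
      rw [hST, hcd] at h
      simp only [Multiset.insert_eq_cons, Multiset.prod_cons, Multiset.prod_singleton] at h
      have hzz : z * z⁻¹ = 1 := mul_inv_cancel₀ hz0
      calc c * d = (z * z⁻¹) * (c * d) := by rw [hzz, one_mul]
        _ = z * (z⁻¹ * (c * d)) := by ring
        _ = -1 := h
    have hc0 : c ≠ 0 := by
      intro h; rw [h, zero_mul] at hcdprod; exact absurd hcdprod (by norm_num)
    have hTinv : T.map (·⁻¹) = T := by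
      have h := hSinv
      rw [hST] at h
      simp only [Multiset.map_cons] at h
      rw [inv_inv, Multiset.cons_swap] at h
      exact (Multiset.cons_inj_right _).mp ((Multiset.cons_inj_right _).mp h)
    have hcT : c ∈ T := by rw [hcd]; simp
    have hcinv : c⁻¹ ∈ T := by
      rw [← hTinv]; exact Multiset.mem_map_of_mem _ hcT
    rw [hcd] at hcinv
    have hcc : c⁻¹ = c ∨ c⁻¹ = d := by simpa using hcinv
    have hT1 : T = {1, -1} := by
      rcases hcc with h | h
      · have hc2 : c * c = 1 := by
          have h' := mul_inv_cancel₀ hc0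
          rwa [h] at h'
        rcases mul_self_eq_one_iff.mp hc2 with hc | hc
        · have hd : d = -1 := by
            rw [hc, one_mul] at hcdprod; exact hcdprod
          rw [hcd, hc, hd]
        · have hd : d = 1 := by
            rw [hc] at hcdprod
            linear_combination -hcdprod
          rw [hcd, hc, hd]
          exact Multiset.pair_comm _ _
      · exfalso
        have h1 := mul_inv_cancel₀ hc0
        rw [h, hcdprod] at h1
        norm_num at h1
    -- produce u and x
    have hzre : z = ((z.re : ℝ) : ℂ) := by
      apply Complex.ext <;> simp [him]
    have habs : 1 < |z.re| := by
      rw [hzre, Complex.norm_real, Real.norm_eq_abs] at hz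
      exact hz
    rcases lt_or_ge 0 z.re with hr | hr
    · refine ⟨1, z.re, Or.inl rfl, ?_, ?_⟩
      · rwa [abs_of_pos hr] at habs
      · rw [hST, hT1, hzre]
        push_cast
        simp
    · refine ⟨-1, -z.re, Or.inr rfl, ?_, ?_⟩
      · rwa [abs_of_nonpos hr] at habs
      · rw [hST, hT1]
        push_cast
        have h1 : (-1 : ℂ) * -(z.re : ℂ) = z := by rw [← hzre]; ring
        have h2 : (-1 : ℂ) * (-(z.re : ℂ))⁻¹ = z⁻¹ := by
          rw [inv_neg, ← hzre]; ring
        rw [h1, h2]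
        rfl
  · -- z is not real: contradiction
    exfalso
    set w : ℂ := (starRingEnd ℂ) z with hw
    have hwS : w ∈ S := hmem_conj z hzS
    have hw0 : w ≠ 0 := by
      simp [hw, hz0]
    have habsw : ‖w‖ = ‖z‖ := by
      simp [hw]
    have habsw_inv : ‖w⁻¹‖ < 1 := by
      rw [norm_inv, habsw]
      exact inv_lt_one_of_one_lt₀ hz
    have hwz : w ≠ z := by
      intro h
      exact him (Complex.conj_eq_iff_im.mp h)
    have hq2 : z⁻¹ ≠ w := by
      intro h; rw [h, habsw] at habs_inv; linarith
    have hq3 : w⁻¹ ≠ z := by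
      intro h; rw [h] at habsw_inv; linarith
    have hq4 : w⁻¹ ≠ w := by
      intro h; rw [h, habsw] at habsw_inv; linarith
    have hq5 : w⁻¹ ≠ z⁻¹ := by
      intro h; exact hwz (inv_injective h)
    have e1 : S = z ::ₘ S.erase z := (Multiset.cons_erase hzS).symm
    have m2 : w ∈ S.erase z := (Multiset.mem_erase_of_ne hwz).mpr hwS
    have e2 : S.erase z = w ::ₘ (S.erase z).erase w := (Multiset.cons_erase m2).symm
    have m3 : z⁻¹ ∈ (S.erase z).erase w :=
      (Multiset.mem_erase_of_ne hq2).mpr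
        ((Multiset.mem_erase_of_ne hzne).mpr (hmem_inv z hzS))
    have e3 : (S.erase z).erase w = z⁻¹ ::ₘ ((S.erase z).erase w).erase z⁻¹ :=
      (Multiset.cons_erase m3).symm
    have m4 : w⁻¹ ∈ ((S.erase z).erase w).erase z⁻¹ :=
      (Multiset.mem_erase_of_ne hq5).mpr
        ((Multiset.mem_erase_of_ne hq4).mpr
          ((Multiset.mem_erase_of_ne hq3).mpr (hmem_inv w hwS)))
    have e4 : ((S.erase z).erase w).erase z⁻¹ =
        w⁻¹ ::ₘ (((S.erase z).erase w).erase z⁻¹).erase w⁻¹ :=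
      (Multiset.cons_erase m4).symm
    set R : Multiset ℂ := (((S.erase z).erase w).erase z⁻¹).erase w⁻¹ with hR
    have hS4 : S = z ::ₘ w ::ₘ z⁻¹ ::ₘ w⁻¹ ::ₘ R := by
      rw [e1, e2, e3, e4]
    have hRcard : Multiset.card R = 0 := by
      have h4 := hcard
      rw [hS4] at h4
      simpa using h4
    have hR0 : R = 0 := Multiset.card_eq_zero.mp hRcard
    have h := hprod
    rw [hS4, hR0] at h
    simp only [Multiset.prod_cons, Multiset.prod_zero, mul_one] at h
    have h1 : z * (w * (z⁻¹ * w⁻¹)) = 1 := by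
      field_simp
    rw [h1] at h
    norm_num at h
end
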